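/- Let λ > 1 and r_λ = √(2(λ−1)). Let I ⊆ (0, ∞) be an open interval and let f : I → ℝ be a positive, twice continuously differentiable solution of f''/(1 + (f')²) = (r/2 − (λ−1)/r) f' − f/2 on I. Then: (i) f has no local minimum at any interior point of I; (ii) if f'(ρ₀) ≥ 0 for some ρ₀ ∈ (0, r_λ) ∩ I, then f''(r) < 0 for all r ∈ (ρ₀, r_λ) ∩ I; (iii) if f'(ρ₀) ≤ 0 for some ρ₀ ∈ (r_λ, ∞) ∩ I, then f''(r) < 0 for all r ∈ (r_λ, ρ₀) ∩ I. -/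

import Mathlib

open Real Set Filter Topology

/-- Properties of positive solutions of the graphical geodesic equation
`f''/(1 + f'²) = (r/2 - (λ-1)/r) f' - f/2` on an open interval `I ⊆ (0,∞)`:
(i) no local minimum; (ii) concavity to the right of a critical slope
on `(0, r_λ)`; (iii) concavity to the left on `(r_λ, ∞)`, where `r_λ = √(2(λ-1))`. -/
theorem graphical_geodesic_properties (lam : ℝ) (hlam : 1 < lam)
    (a b : ℝ) (I : Set ℝ) (hI : I = Set.Ioo a b) (hsub : I ⊆ Set.Ioi 0)
    (f : ℝ → ℝ) (hreg : ContDiffOn ℝ 2 f I)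
    (hpos : ∀ r ∈ I, 0 < f r)
    (heq : ∀ r ∈ I, deriv (deriv f) r / (1 + (deriv f r) ^ 2)
        = (r / 2 - (lam - 1) / r) * deriv f r - f r / 2) :
    (∀ r ∈ I, ¬ IsLocalMin f r) ∧
    (∀ ρ ∈ Set.Ioo 0 (Real.sqrt (2 * (lam - 1))) ∩ I, 0 ≤ deriv f ρ →
      ∀ r ∈ Set.Ioo ρ (Real.sqrt (2 * (lam - 1))) ∩ I, deriv (deriv f) r < 0) ∧
    (∀ ρ ∈ Set.Ioi (Real.sqrt (2 * (lam - 1))) ∩ I, deriv f ρ ≤ 0 →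
      ∀ r ∈ Set.Ioo (Real.sqrt (2 * (lam - 1))) ρ ∩ I, deriv (deriv f) r < 0) := by
  have hIo : IsOpen I := hI ▸ isOpen_Ioo
  have hIconn : OrdConnected I := hI ▸ ordConnected_Ioo
  set rl := Real.sqrt (2 * (lam - 1)) with hrl
  have hrl2 : rl ^ 2 = 2 * (lam - 1) := Real.sq_sqrt (by linarith)
  have hrl0 : 0 ≤ rl := Real.sqrt_nonneg _
  set g := deriv f with hg
  set g' := deriv g with hg'
  have hfd : DifferentiableOn ℝ f I := hreg.differentiableOn (by norm_num)
  have hgc : ContDiffOn ℝ 1 g I := hreg.deriv_of_isOpen hIo (by norm_num)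
  have hgd : DifferentiableOn ℝ g I := hgc.differentiableOn (by norm_num)
  have hfda : ∀ r ∈ I, HasDerivAt f (g r) r := fun r hr =>
    (hfd.differentiableAt (hIo.mem_nhds hr)).hasDerivAt
  have hgda : ∀ r ∈ I, HasDerivAt g (g' r) r := fun r hr =>
    (hgd.differentiableAt (hIo.mem_nhds hr)).hasDerivAt
  set u : ℝ → ℝ := fun x => (x / 2 - (lam - 1) / x) * g x - f x / 2 with hudef
  have heq' : ∀ r ∈ I, g' r = (1 + g r ^ 2) * u r := by
    intro r hr
    have h1 : (0:ℝ) < 1 + g r ^ 2 := by positivity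
    have h2 := heq r hr
    rw [div_eq_iff h1.ne'] at h2
    simp only [hudef]
    rw [h2]; ring
  have hucont : ContinuousOn u I := by
    rw [hudef]
    apply ContinuousOn.sub
    · apply ContinuousOn.mul
      · apply ContinuousOn.sub
        · exact (continuous_id.div_const 2).continuousOn
        · exact continuousOn_const.div continuousOn_id fun x hx => ne_of_gt (hsub hx)
      · exact hgd.continuousOn
    · exact hreg.continuousOn.div_const 2
  have huderiv : ∀ r ∈ I,
      HasDerivAt u ((lam - 1) / r ^ 2 * g r + (r / 2 - (lam - 1) / r) * g' r) r := by
    intro r hr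
    have hr0 : (0:ℝ) < r := hsub hr
    have hA : HasDerivAt (fun x : ℝ => x / 2) (1/2 : ℝ) r := by
      simpa using (hasDerivAt_id r).div_const 2
    have hB : HasDerivAt (fun x : ℝ => (lam - 1) / x) ((lam - 1) * -(r^2)⁻¹) r := by
      simpa [div_eq_mul_inv] using (hasDerivAt_inv (ne_of_gt hr0)).const_mul (lam - 1)
    have h1 : HasDerivAt (fun x : ℝ => x / 2 - (lam - 1) / x) (1/2 + (lam-1)/r^2) r := by
      exact (hA.sub hB).congr_deriv (by ring)
    have h2 := (h1.mul (hgda r hr)).sub ((hfda r hr).div_const 2)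
    rw [hudef]
    exact h2.congr_deriv (by ring)
  have hneg_h : ∀ r : ℝ, 0 < r → r < rl → r / 2 - (lam - 1) / r < 0 := by
    intro r h0 h1
    rw [sub_neg, div_lt_div_iff₀ two_pos h0]
    nlinarith [mul_self_lt_mul_self h0.le h1]
  have hpos_h : ∀ r : ℝ, rl < r → 0 < r / 2 - (lam - 1) / r := by
    intro r h1
    have h0 : 0 < r := lt_of_le_of_lt hrl0 h1
    rw [sub_pos, div_lt_div_iff₀ h0 two_pos]
    nlinarith [mul_self_lt_mul_self hrl0 h1]
  refine ⟨?_, ?_, ?_⟩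
  · -- (i) no local minimum
    intro r hr hmin
    have hg0 : g r = 0 := hmin.deriv_eq_zero
    have hg'neg : g' r < 0 := by
      have h2 := heq' r hr
      simp only [hudef, hg0] at h2
      have := hpos r hr
      rw [h2]; ring_nf; nlinarith
    have hslope := hasDerivAt_iff_tendsto_slope.1 (hgda r hr)
    have hslope' : Tendsto (slope g r) (𝓝[>] r) (𝓝 (g' r)) :=
      hslope.mono_left (nhdsWithin_mono _ fun x (hx : r < x) => hx.ne')
    have h3 : ∀ᶠ x in 𝓝[>] r, g x < 0 := by
      filter_upwards [hslope'.eventually_lt_const hg'neg, self_mem_nhdsWithin] with x hx hx'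
      rw [slope_def_field, hg0, sub_zero] at hx
      have hxr : 0 < x - r := sub_pos.2 hx'
      by_contra h
      push_neg at h
      exact absurd (div_nonneg h hxr.le) (not_le.2 hx)
    have h4 : ∀ᶠ x in 𝓝[>] r, x ∈ I := nhdsWithin_le_nhds (hIo.mem_nhds hr)
    have h5 : ∀ᶠ x in 𝓝[>] r, f r ≤ f x := nhdsWithin_le_nhds hmin
    obtain ⟨c, hc, hsubc⟩ := mem_nhdsGT_iff_exists_Ioo_subset.1
      ((h3.and (h4.and h5)) : _)
    set x := (r + c) / 2 with hx
    have hrx : r < x := by simp only [hx]; linarith [mem_Ioi.1 hc]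
    have hxc : x < c := by simp only [hx]; linarith [mem_Ioi.1 hc]
    have hxmem := hsubc ⟨hrx, hxc⟩
    have hIcc : Icc r x ⊆ I := by
      intro y hy
      rcases eq_or_lt_of_le hy.1 with h | h
      · rwa [← h]
      · exact (hsubc ⟨h, lt_of_le_of_lt hy.2 hxc⟩).2.1
    obtain ⟨cc, hcc, hcceq⟩ := exists_hasDerivAt_eq_slope f g hrx
      (hreg.continuousOn.mono hIcc)
      (fun y hy => hfda y (hsubc ⟨hy.1, hy.2.trans hxc⟩).2.1)
    have hgcc : g cc < 0 := (hsubc ⟨hcc.1, hcc.2.trans hxc⟩).1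
    have : 0 ≤ g cc := by
      rw [hcceq]
      exact div_nonneg (by linarith [hxmem.2.2]) (by linarith)
    linarith
  · -- (ii)
    rintro ρ ⟨hρmem, hρI⟩ hgρ r₀ ⟨hr₀mem, hr₀I⟩
    by_contra hcon
    push_neg at hcon
    have hu₀ : 0 ≤ u r₀ := by
      have h2 := heq' r₀ hr₀I
      by_contra h; push_neg at h
      nlinarith [sq_nonneg (g r₀)]
    have hρr₀ : ρ < r₀ := hr₀mem.1
    have hIccI : Icc ρ r₀ ⊆ I := hIconn.out hρI hr₀I
    set T := Icc ρ r₀ ∩ u ⁻¹' (Ici 0) with hT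
    have hTc : IsClosed T :=
      (hucont.mono hIccI).preimage_isClosed_of_isClosed isClosed_Icc isClosed_Ici
    have hTne : T.Nonempty := ⟨r₀, ⟨⟨hρr₀.le, le_rfl⟩, by simpa using hu₀⟩⟩
    have hTbdd : BddBelow T := ⟨ρ, fun x hx => hx.1.1⟩
    set r₂ := sInf T with hr₂def
    have hr₂T : r₂ ∈ T := hTc.csInf_mem hTne hTbdd
    have hur₂ : 0 ≤ u r₂ := hr₂T.2
    have hr₂I : r₂ ∈ I := hIccI hr₂T.1
    have hr₂0 : (0:ℝ) < r₂ := hsub hr₂I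
    have huρ : u ρ < 0 := by
      have h0 : ρ / 2 - (lam - 1) / ρ < 0 := hneg_h ρ hρmem.1 hρmem.2
      have h1 : (ρ / 2 - (lam - 1) / ρ) * g ρ ≤ 0 := mul_nonpos_of_nonpos_of_nonneg h0.le hgρ
      have h2 := hpos ρ hρI
      simp only [hudef]
      nlinarith
    have hρr₂ : ρ < r₂ :=
      hr₂T.1.1.lt_of_ne fun h => absurd hur₂ (by rw [← h]; exact not_le.2 huρ)
    have hulr : ∀ x ∈ Ico ρ r₂, u x < 0 := by
      intro x hx
      by_contra h; push_neg at h
      have hxT : x ∈ T := ⟨⟨hx.1, hx.2.le.trans hr₂T.1.2⟩, by simpa using h⟩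
      exact absurd (csInf_le hTbdd hxT) (not_le.2 hx.2)
    have hur₂0 : u r₂ = 0 := by
      have hc : ContinuousAt u r₂ := hucont.continuousAt (hIo.mem_nhds hr₂I)
      have ht : Tendsto u (𝓝[<] r₂) (𝓝 (u r₂)) := hc.continuousWithinAt.tendsto
      have hev : ∀ᶠ x in 𝓝[<] r₂, u x ≤ 0 := by
        filter_upwards [Ioo_mem_nhdsLT_of_mem (⟨hρr₂, le_rfl⟩ : r₂ ∈ Ioc ρ r₂)] with x hx
        exact (hulr x ⟨hx.1.le, hx.2⟩).le
      exact le_antisymm (le_of_tendsto ht hev) hur₂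
    have hhr₂ : r₂ / 2 - (lam - 1) / r₂ < 0 :=
      hneg_h r₂ hr₂0 (lt_of_le_of_lt hr₂T.1.2 hr₀mem.2)
    have hfr₂ := hpos r₂ hr₂I
    have hgneg : g r₂ < 0 := by
      have h1 : (r₂ / 2 - (lam - 1) / r₂) * g r₂ = f r₂ / 2 := by
        have h2 := hur₂0
        simp only [hudef] at h2
        linarith
      nlinarith
    have hg'r₂ : g' r₂ = 0 := by rw [heq' r₂ hr₂I, hur₂0, mul_zero]
    have hud := huderiv r₂ hr₂I
    rw [hg'r₂, mul_zero, add_zero] at hud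
    have hu'neg : (lam - 1) / r₂ ^ 2 * g r₂ < 0 :=
      mul_neg_of_pos_of_neg (div_pos (by linarith) (by positivity)) hgneg
    have hslope := hasDerivAt_iff_tendsto_slope.1 hud
    have hslope' : Tendsto (slope u r₂) (𝓝[<] r₂) (𝓝 ((lam - 1) / r₂ ^ 2 * g r₂)) :=
      hslope.mono_left (nhdsWithin_mono _ fun x (hx : x < r₂) => hx.ne)
    have hge : 0 ≤ (lam - 1) / r₂ ^ 2 * g r₂ := by
      refine ge_of_tendsto hslope' ?_
      filter_upwards [Ioo_mem_nhdsLT_of_mem (⟨hρr₂, le_rfl⟩ : r₂ ∈ Ioc ρ r₂)] with x hx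
      have hux : u x < 0 := hulr x ⟨hx.1.le, hx.2⟩
      rw [slope_def_field, hur₂0, sub_zero]
      exact (div_pos_of_neg_of_neg hux (by linarith [hx.2])).le
    linarith
  · -- (iii)
    rintro ρ ⟨hρmem, hρI⟩ hgρ r₀ ⟨hr₀mem, hr₀I⟩
    by_contra hcon
    push_neg at hcon
    have hu₀ : 0 ≤ u r₀ := by
      have h2 := heq' r₀ hr₀I
      by_contra h; push_neg at h
      nlinarith [sq_nonneg (g r₀)]
    have hr₀ρ : r₀ < ρ := hr₀mem.2
    have hIccI : Icc r₀ ρ ⊆ I := hIconn.out hr₀I hρI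
    set T := Icc r₀ ρ ∩ u ⁻¹' (Ici 0) with hT
    have hTc : IsClosed T :=
      (hucont.mono hIccI).preimage_isClosed_of_isClosed isClosed_Icc isClosed_Ici
    have hTne : T.Nonempty := ⟨r₀, ⟨⟨le_rfl, hr₀ρ.le⟩, by simpa using hu₀⟩⟩
    have hTbdd : BddAbove T := ⟨ρ, fun x hx => hx.1.2⟩
    set r₂ := sSup T with hr₂def
    have hr₂T : r₂ ∈ T := hTc.csSup_mem hTne hTbdd
    have hur₂ : 0 ≤ u r₂ := hr₂T.2
    have hr₂I : r₂ ∈ I := hIccI hr₂T.1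
    have hr₂0 : (0:ℝ) < r₂ := hsub hr₂I
    have huρ : u ρ < 0 := by
      have h0 : 0 < ρ / 2 - (lam - 1) / ρ := hpos_h ρ hρmem
      have h1 : (ρ / 2 - (lam - 1) / ρ) * g ρ ≤ 0 := mul_nonpos_of_nonneg_of_nonpos h0.le hgρ
      have h2 := hpos ρ hρI
      simp only [hudef]
      nlinarith
    have hr₂ρ : r₂ < ρ :=
      hr₂T.1.2.lt_of_ne fun h => absurd hur₂ (by rw [h]; exact not_le.2 huρ)
    have hulr : ∀ x ∈ Ioc r₂ ρ, u x < 0 := by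
      intro x hx
      by_contra h; push_neg at h
      have hxT : x ∈ T := ⟨⟨hr₂T.1.1.trans hx.1.le, hx.2⟩, by simpa using h⟩
      exact absurd (le_csSup hTbdd hxT) (not_le.2 hx.1)
    have hur₂0 : u r₂ = 0 := by
      have hc : ContinuousAt u r₂ := hucont.continuousAt (hIo.mem_nhds hr₂I)
      have ht : Tendsto u (𝓝[>] r₂) (𝓝 (u r₂)) := hc.continuousWithinAt.tendsto
      have hev : ∀ᶠ x in 𝓝[>] r₂, u x ≤ 0 := by
        filter_upwards [Ioo_mem_nhdsGT_of_mem (⟨le_rfl, hr₂ρ⟩ : r₂ ∈ Ico r₂ ρ)] with x hx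
        exact (hulr x ⟨hx.1, hx.2.le⟩).le
      exact le_antisymm (le_of_tendsto ht hev) hur₂
    have hhr₂ : 0 < r₂ / 2 - (lam - 1) / r₂ :=
      hpos_h r₂ (lt_of_lt_of_le hr₀mem.1 hr₂T.1.1)
    have hfr₂ := hpos r₂ hr₂I
    have hgpos : 0 < g r₂ := by
      have h1 : (r₂ / 2 - (lam - 1) / r₂) * g r₂ = f r₂ / 2 := by
        have h2 := hur₂0
        simp only [hudef] at h2
        linarith
      nlinarith
    have hg'r₂ : g' r₂ = 0 := by rw [heq' r₂ hr₂I, hur₂0, mul_zero]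
    have hud := huderiv r₂ hr₂I
    rw [hg'r₂, mul_zero, add_zero] at hud
    have hu'pos : 0 < (lam - 1) / r₂ ^ 2 * g r₂ :=
      mul_pos (div_pos (by linarith) (by positivity)) hgpos
    have hslope := hasDerivAt_iff_tendsto_slope.1 hud
    have hslope' : Tendsto (slope u r₂) (𝓝[>] r₂) (𝓝 ((lam - 1) / r₂ ^ 2 * g r₂)) :=
      hslope.mono_left (nhdsWithin_mono _ fun x (hx : r₂ < x) => hx.ne')
    have hle : (lam - 1) / r₂ ^ 2 * g r₂ ≤ 0 := by
      refine le_of_tendsto hslope' ?_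
      filter_upwards [Ioo_mem_nhdsGT_of_mem (⟨le_rfl, hr₂ρ⟩ : r₂ ∈ Ico r₂ ρ)] with x hx
      have hux : u x < 0 := hulr x ⟨hx.1, hx.2.le⟩
      rw [slope_def_field, hur₂0, sub_zero]
      exact (div_neg_of_neg_of_pos hux (by linarith [hx.1])).le
    linarith
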